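/- Under the assumptions of the general regret lemma (f nonnegative convex β-smooth with a ρ-flat minimum w*, updates w_{t+1} = w_t − η∇f(w_t + v_t) with v_t ∈ argmax_{‖v‖≤r} f(w_t + v), η ≤ 1/(4β)), the averaged iterate ŵ = (1/T)Σ w_t satisfies max_{‖v‖≤r} f(ŵ + v) ≤ ‖w_1 − w*‖²/(ηT) + 4β·max(r − ρ, 0)². -/

import Mathlib

open Finset RealInnerProductSpace

section Aux

variable {E : Type*} [NormedAddCommGroup E] [InnerProductSpace ℝ E] [CompleteSpace E]


lemma line_hasDerivAt (f : E → ℝ) (hdiff : Differentiable ℝ f) (x v : E) (t : ℝ) :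
    HasDerivAt (fun s : ℝ => f (x + s • v)) ⟪gradient f (x + t • v), v⟫ t := by
  have hc : HasDerivAt (fun s : ℝ => x + s • v) v t := by
    simpa using ((hasDerivAt_id t).smul_const v).const_add x
  have hf : HasFDerivAt f ((InnerProductSpace.toDual ℝ E) (gradient f (x + t • v)))
      (x + t • v) := hasGradientAt_iff_hasFDerivAt.mp (hdiff _).hasGradientAt
  have := hf.comp_hasDerivAt t hc
  simp only [Function.comp_def, InnerProductSpace.toDual_apply_apply] at this
  exact this

lemma grad_ineq (f : E → ℝ) (hconv : ConvexOn ℝ Set.univ f) (hdiff : Differentiable ℝ f)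
    (x y : E) : f x + ⟪gradient f x, y - x⟫ ≤ f y := by
  have hφconv : ConvexOn ℝ Set.univ (fun t : ℝ => f (x + t • (y - x))) := by
    have := hconv.comp_affineMap (AffineMap.lineMap x y : ℝ →ᵃ[ℝ] E)
    have heq : (f ∘ (AffineMap.lineMap x y : ℝ →ᵃ[ℝ] E))
        = fun t : ℝ => f (x + t • (y - x)) := by
      funext t
      simp [AffineMap.lineMap_apply, add_comm]
    rw [heq] at this
    simpa using this
  have hd : HasDerivAt (fun t : ℝ => f (x + t • (y - x))) ⟪gradient f x, y - x⟫ 0 := by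
    simpa using line_hasDerivAt f hdiff x (y - x) 0
  have hs := hφconv.le_slope_of_hasDerivAt (Set.mem_univ (0:ℝ)) (Set.mem_univ (1:ℝ))
    one_pos hd
  simp [slope_def_field] at hs
  have e : ⟪gradient f x, y - x⟫ = (fderiv ℝ f x) y - (fderiv ℝ f x) x := by simp
  linarith

lemma descent (f : E → ℝ) (hdiff : Differentiable ℝ f) {β : ℝ} (hβ : 0 < β)
    (hsmooth : ∀ a b : E, ‖gradient f a - gradient f b‖ ≤ β * ‖a - b‖) (x v : E) :
    f (x + v) ≤ f x + ⟪gradient f x, v⟫ + β / 2 * ‖v‖ ^ 2 := by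
  set ψ : ℝ → ℝ := fun t =>
    f (x + t • v) - t * ⟪gradient f x, v⟫ - β / 2 * t ^ 2 * ‖v‖ ^ 2 with hψ
  have hψd : ∀ t : ℝ, HasDerivAt ψ
      (⟪gradient f (x + t • v), v⟫ - ⟪gradient f x, v⟫ - β * t * ‖v‖ ^ 2) t := by
    intro t
    have h1 := line_hasDerivAt f hdiff x v t
    have h2 : HasDerivAt (fun s : ℝ => s * ⟪gradient f x, v⟫) ⟪gradient f x, v⟫ t := by
      simpa using (hasDerivAt_id t).mul_const (⟪gradient f x, v⟫)
    have h3 : HasDerivAt (fun s : ℝ => β / 2 * s ^ 2 * ‖v‖ ^ 2) (β * t * ‖v‖ ^ 2) t := by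
      have := ((hasDerivAt_pow 2 t).const_mul (β / 2)).mul_const (‖v‖ ^ 2)
      refine this.congr_deriv ?_
      ring
    exact (h1.sub h2).sub h3
  have hanti : AntitoneOn ψ (Set.Icc (0:ℝ) 1) := by
    apply antitoneOn_of_deriv_nonpos (convex_Icc 0 1)
    · exact (Differentiable.continuous (fun t => (hψd t).differentiableAt)).continuousOn
    · exact Differentiable.differentiableOn (fun t => (hψd t).differentiableAt)
    · intro t ht
      rw [interior_Icc] at ht
      rw [(hψd t).deriv]
      have hip : ⟪gradient f (x + t • v) - gradient f x, v⟫ ≤ β * t * ‖v‖ ^ 2 := by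
        calc ⟪gradient f (x + t • v) - gradient f x, v⟫
            ≤ ‖gradient f (x + t • v) - gradient f x‖ * ‖v‖ := real_inner_le_norm _ _
          _ ≤ (β * ‖(x + t • v) - x‖) * ‖v‖ := by
              have := hsmooth (x + t • v) x
              exact mul_le_mul_of_nonneg_right this (norm_nonneg _)
          _ = β * t * ‖v‖ ^ 2 := by
              simp [norm_smul, abs_of_pos ht.1]
              ring
      rw [inner_sub_left] at hip
      linarith
  have h10 := hanti (Set.left_mem_Icc.2 zero_le_one) (Set.right_mem_Icc.2 zero_le_one)
    zero_le_one
  have e1 : ψ 1 = f (x + v) - ⟪gradient f x, v⟫ - β / 2 * ‖v‖ ^ 2 := by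
    simp [hψ]
  have e0 : ψ 0 = f x := by simp [hψ]
  rw [e1, e0] at h10
  linarith

lemma grad_sq_le (f : E → ℝ) (hnonneg : ∀ w, 0 ≤ f w) (hdiff : Differentiable ℝ f)
    {β : ℝ} (hβ : 0 < β)
    (hsmooth : ∀ a b : E, ‖gradient f a - gradient f b‖ ≤ β * ‖a - b‖) (x : E) :
    ‖gradient f x‖ ^ 2 ≤ 2 * β * f x := by
  set g := gradient f x with hg
  have h := descent f hdiff hβ hsmooth x (-(β⁻¹ • g))
  have h0 := hnonneg (x + -(β⁻¹ • g))
  have h1 : ⟪g, -(β⁻¹ • g)⟫ = -(β⁻¹ * ‖g‖ ^ 2) := by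
    rw [inner_neg_right, real_inner_smul_right, real_inner_self_eq_norm_sq]
  have h2 : ‖-(β⁻¹ • g)‖ ^ 2 = β⁻¹ ^ 2 * ‖g‖ ^ 2 := by
    rw [norm_neg, norm_smul, mul_pow, Real.norm_eq_abs, sq_abs]
  rw [h1, h2] at h
  have hβ' : β ≠ 0 := ne_of_gt hβ
  have key : f x + -(β⁻¹ * ‖g‖ ^ 2) + β / 2 * (β⁻¹ ^ 2 * ‖g‖ ^ 2)
      = f x - ‖g‖ ^ 2 / (2 * β) := by
    field_simp
    ring
  rw [key] at h
  have : 0 ≤ f x - ‖g‖ ^ 2 / (2 * β) := le_trans h0 h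
  rw [le_sub_iff_add_le, zero_add, div_le_iff₀ (by positivity)] at this
  linarith [this]

end Aux

/-- SA-GD: under the regret-lemma assumptions, with `v_t` a maximizer of `f(w_t + v)`
over `‖v‖ ≤ r`, the averaged iterate `ŵ = (1/T)Σ w_t` satisfies
`max_{‖v‖≤r} f(ŵ + v) ≤ ‖w₁ - w*‖²/(ηT) + 4β·max(r-ρ,0)²`. -/
theorem stmt_10 (d : ℕ) (β ρ r η : ℝ) (hβ : 0 < β) (hρ : 0 ≤ ρ) (hr : 0 ≤ r)
    (hη : 0 < η) (hη' : η ≤ 1 / (4 * β))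
    (f : EuclideanSpace ℝ (Fin d) → ℝ)
    (hnonneg : ∀ w, 0 ≤ f w) (hconv : ConvexOn ℝ Set.univ f) (hdiff : Differentiable ℝ f)
    (hsmooth : ∀ x y, ‖gradient f x - gradient f y‖ ≤ β * ‖x - y‖)
    (wstar : EuclideanSpace ℝ (Fin d)) (hflat : ∀ u, ‖u‖ ≤ ρ → f (wstar + u) = 0)
    (T : ℕ) (hT : 1 ≤ T) (w v : ℕ → EuclideanSpace ℝ (Fin d))
    (hv : ∀ t, ‖v t‖ ≤ r)
    (hmax : ∀ t, ∀ u : EuclideanSpace ℝ (Fin d), ‖u‖ ≤ r → f (w t + u) ≤ f (w t + v t))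
    (hupd : ∀ t, w (t + 1) = w t - η • gradient f (w t + v t)) :
    ∀ u : EuclideanSpace ℝ (Fin d), ‖u‖ ≤ r →
      f (((T : ℝ)⁻¹ • ∑ t ∈ Finset.Icc 1 T, w t) + u)
        ≤ ‖w 1 - wstar‖ ^ 2 / (η * T) + 4 * β * max (r - ρ) 0 ^ 2 := by
  intro u hu
  set M : ℝ := max (r - ρ) 0 with hM
  have hM0 : 0 ≤ M := le_max_right _ _
  set D : ℕ → ℝ := fun t => ‖w t - wstar‖ ^ 2 with hD
  have hηβ : 4 * β * η ≤ 1 := by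
    rw [le_div_iff₀ (by positivity)] at hη'
    linarith
  -- key one-step inequality
  have key : ∀ t : ℕ, η * f (w t + v t) ≤ D t - D (t + 1) + 4 * η * β * M ^ 2 := by
    intro t
    set x := w t + v t with hx
    set g := gradient f x with hg
    set G := ‖g‖ with hG
    set F := f x with hF
    -- projected perturbation
    set v' : EuclideanSpace ℝ (Fin d) :=
      if ‖v t‖ ≤ ρ then v t else (ρ / ‖v t‖) • v t with hv'
    have hvt0 : ‖v t‖ ≤ ρ ∨ 0 < ‖v t‖ := by
      rcases le_or_gt (‖v t‖) ρ with h | h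
      · exact Or.inl h
      · exact Or.inr (lt_of_le_of_lt hρ h)
    have hv'norm : ‖v'‖ ≤ ρ := by
      rw [hv']
      split_ifs with h
      · exact h
      · push_neg at h
        have hn : 0 < ‖v t‖ := lt_of_le_of_lt hρ h
        rw [norm_smul, Real.norm_eq_abs, abs_of_nonneg (by positivity),
          div_mul_cancel₀ _ (ne_of_gt hn)]
    have hdiffnorm : ‖v t - v'‖ ≤ M := by
      rw [hv']
      split_ifs with h
      · simp [hM0]
      · push_neg at h
        have hn : 0 < ‖v t‖ := lt_of_le_of_lt hρ h
        have : v t - (ρ / ‖v t‖) • v t = (1 - ρ / ‖v t‖) • v t := by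
          rw [sub_smul, one_smul]
        rw [this, norm_smul, Real.norm_eq_abs]
        have hle : ρ / ‖v t‖ ≤ 1 := by
          rw [div_le_one hn]; exact le_of_lt h
        rw [abs_of_nonneg (by linarith)]
        have : (1 - ρ / ‖v t‖) * ‖v t‖ = ‖v t‖ - ρ := by
          field_simp
        rw [this]
        have := hv t
        exact le_trans (by linarith) (le_max_left _ _)
    -- gradient inequality lower bound
    have hlow : F - G * M ≤ ⟪w t - wstar, g⟫ := by
      have h1 := grad_ineq f hconv hdiff x (wstar + v')
      rw [hflat v' hv'norm] at h1
      have h2 : (wstar + v') - x = -(w t - wstar) - (v t - v') := by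
        rw [hx]; abel
      rw [h2] at h1
      have h3 : ⟪g, -(w t - wstar) - (v t - v')⟫
          = -⟪g, w t - wstar⟫ - ⟪g, v t - v'⟫ := by
        rw [inner_sub_right, inner_neg_right]
      rw [h3] at h1
      have h4 : ⟪g, v t - v'⟫ ≤ G * M := by
        calc ⟪g, v t - v'⟫ ≤ ‖g‖ * ‖v t - v'‖ := real_inner_le_norm _ _
          _ ≤ G * M := by
              rw [hG]
              exact mul_le_mul_of_nonneg_left hdiffnorm (norm_nonneg _)
      rw [real_inner_comm]
      linarith
    -- norm expansion
    have hexp : D (t + 1) = D t - 2 * η * ⟪w t - wstar, g⟫ + η ^ 2 * G ^ 2 := by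
      have : w (t + 1) - wstar = (w t - wstar) - η • g := by
        rw [hupd t, hg, hx]; abel
      rw [hD]
      simp only [this]
      rw [norm_sub_sq_real, real_inner_smul_right, norm_smul, Real.norm_eq_abs,
        abs_of_pos hη, mul_pow]
      ring
    have hG2 : G ^ 2 ≤ 2 * β * F := grad_sq_le f hnonneg hdiff hβ hsmooth x
    have hF0 : 0 ≤ F := hnonneg x
    have hG0 : 0 ≤ G := norm_nonneg _
    nlinarith [mul_nonneg hη.le (sq_nonneg (G - 4 * β * M)),
      mul_nonneg (mul_nonneg hη.le (sq_nonneg G)) (sub_nonneg.2 hηβ),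
      mul_nonneg hη.le (sub_nonneg.2 hG2), hlow,
      mul_le_mul_of_nonneg_left hlow (by positivity : (0:ℝ) ≤ 2 * η)]
  -- summed inequality
  have hsum : ∀ n : ℕ, (∑ t ∈ Finset.Icc 1 n, η * f (w t + v t))
      ≤ D 1 - D (n + 1) + n * (4 * η * β * M ^ 2) := by
    intro n
    induction n with
    | zero => simp
    | succ n ih =>
      rw [Finset.sum_Icc_succ_top (Nat.le_add_left 1 n)]
      have := key (n + 1)
      push_cast
      linarith
  have hDpos : 0 ≤ D (T + 1) := sq_nonneg _
  have hsumT : (∑ t ∈ Finset.Icc 1 T, η * f (w t + v t))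
      ≤ D 1 + T * (4 * η * β * M ^ 2) := le_trans (hsum T) (by linarith)
  -- Jensen
  have hTpos : (0:ℝ) < T := by exact_mod_cast hT
  have hcard : (Finset.Icc 1 T).card = T := by
    rw [Nat.card_Icc]; omega
  have hwsum : ∑ t ∈ Finset.Icc 1 T, ((T:ℝ)⁻¹) = 1 := by
    rw [Finset.sum_const, hcard, nsmul_eq_mul, mul_inv_cancel₀ (ne_of_gt hTpos)]
  have hjen := hconv.map_sum_le (t := Finset.Icc 1 T) (w := fun _ => (T:ℝ)⁻¹)
    (p := fun t => w t + u) (fun _ _ => by positivity) hwsum (fun _ _ => Set.mem_univ _)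
  have hpt : ∑ t ∈ Finset.Icc 1 T, (T:ℝ)⁻¹ • (w t + u)
      = ((T : ℝ)⁻¹ • ∑ t ∈ Finset.Icc 1 T, w t) + u := by
    rw [← Finset.smul_sum, Finset.sum_add_distrib, Finset.sum_const, hcard, smul_add]
    congr 1
    rw [← Nat.cast_smul_eq_nsmul ℝ, inv_smul_smul₀ (ne_of_gt hTpos)]
  rw [hpt] at hjen
  have hbound : ∑ t ∈ Finset.Icc 1 T, (T:ℝ)⁻¹ • f (w t + u)
      ≤ (T:ℝ)⁻¹ * (D 1 / η + T * (4 * β * M ^ 2)) := by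
    have step1 : ∑ t ∈ Finset.Icc 1 T, (T:ℝ)⁻¹ • f (w t + u)
        ≤ ∑ t ∈ Finset.Icc 1 T, (T:ℝ)⁻¹ * f (w t + v t) := by
      apply Finset.sum_le_sum
      intro t _
      rw [smul_eq_mul]
      exact mul_le_mul_of_nonneg_left (hmax t u hu) (by positivity)
    have step2 : ∑ t ∈ Finset.Icc 1 T, (T:ℝ)⁻¹ * f (w t + v t)
        = (T:ℝ)⁻¹ * ∑ t ∈ Finset.Icc 1 T, f (w t + v t) := by
      rw [Finset.mul_sum]
    have step3 : ∑ t ∈ Finset.Icc 1 T, f (w t + v t)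
        ≤ D 1 / η + T * (4 * β * M ^ 2) := by
      have : η * ∑ t ∈ Finset.Icc 1 T, f (w t + v t)
          = ∑ t ∈ Finset.Icc 1 T, η * f (w t + v t) := by rw [Finset.mul_sum]
      rw [div_add' _ _ _ (ne_of_gt hη), le_div_iff₀ hη]
      calc (∑ t ∈ Finset.Icc 1 T, f (w t + v t)) * η
          = ∑ t ∈ Finset.Icc 1 T, η * f (w t + v t) := by
            rw [← this]; ring
        _ ≤ D 1 + T * (4 * η * β * M ^ 2) := hsumT
        _ = D 1 + T * (4 * β * M ^ 2) * η := by ring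
    calc ∑ t ∈ Finset.Icc 1 T, (T:ℝ)⁻¹ • f (w t + u)
        ≤ (T:ℝ)⁻¹ * ∑ t ∈ Finset.Icc 1 T, f (w t + v t) := by rw [← step2]; exact step1
      _ ≤ (T:ℝ)⁻¹ * (D 1 / η + T * (4 * β * M ^ 2)) :=
          mul_le_mul_of_nonneg_left step3 (by positivity)
  have hfinal : (T:ℝ)⁻¹ * (D 1 / η + T * (4 * β * M ^ 2))
      = ‖w 1 - wstar‖ ^ 2 / (η * T) + 4 * β * M ^ 2 := by
    rw [hD]
    field_simp
  calc f (((T : ℝ)⁻¹ • ∑ t ∈ Finset.Icc 1 T, w t) + u)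
      ≤ ∑ t ∈ Finset.Icc 1 T, (T:ℝ)⁻¹ • f (w t + u) := hjen
    _ ≤ (T:ℝ)⁻¹ * (D 1 / η + T * (4 * β * M ^ 2)) := hbound
    _ = ‖w 1 - wstar‖ ^ 2 / (η * T) + 4 * β * M ^ 2 := hfinal
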